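/- Let M be a finite k[X]-module annihilated by a power of X, of length b. Then, in ℤ[T], Σ_{I ⊆ M} T^{ℓ(I) − t(I)} · ∏_{i=0}^{t(I)−1} (T − qⁱ) = T^b, where the sum ranges over all k[X]-submodules I of M. -/
import Mathlib


/-!
Fix an odd prime power `q` and a finite field `k` with `#k = q`; work with `k[X]`-modules.
For finite `k[X]`-modules annihilated by a power of `X`, length over `k[X]` coincides with
`dim_k`; write `ℓ(M) := Module.finrank k M` and `t(M) := dim_k (M / X·M)`.

Statement: for such `M` of length `b`,
`Σ_{I ⊆ M} T^{ℓ(I) − t(I)} ∏_{i=0}^{t(I)−1} (T − qⁱ) = T^b` in `ℤ[T]`,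
the sum over all `k[X]`-submodules `I` of `M`.
-/

open Polynomial

noncomputable section

/-- The invariant `t(M) = dim_k (M / X·M)` of a `k[X]`-module `M`. -/
def tX (k : Type) [Field k] (M : Type) [AddCommGroup M] [Module (Polynomial k) M]
    [Module k M] [IsScalarTower k (Polynomial k) M] : ℕ :=
  Module.finrank k
    (M ⧸ LinearMap.range (LinearMap.lsmul (Polynomial k) M (Polynomial.X : Polynomial k)))

open Module Submodule

variable {k : Type} [Field k] [Fintype k]

lemma span_rows_top_iff_cols_li (n t : ℕ) (A : Fin n → Fin t → k) :
    Submodule.span k (Set.range A) = ⊤ ↔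
      LinearIndependent k (fun i j => A j i : Fin t → Fin n → k) := by
  let Am : Matrix (Fin n) (Fin t) k := Matrix.of A
  have hr : Am.rank = Module.finrank k (span k (Set.range A)) :=
    Matrix.rank_eq_finrank_span_row Am
  have hc : Am.rank = Module.finrank k (span k (Set.range (fun i j => A j i : Fin t → Fin n → k))) :=
    Matrix.rank_eq_finrank_span_cols Am
  rw [linearIndependent_iff_card_eq_finrank_span]
  unfold Set.finrank
  constructor
  · intro h
    rw [h, finrank_top, Module.finrank_fintype_fun_eq_card, Fintype.card_fin] at hr
    rw [← hc, hr, Fintype.card_fin]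
  · intro h
    apply Submodule.eq_top_of_finrank_eq
    rw [← hr, hc, ← h, Fintype.card_fin, Module.finrank_fintype_fun_eq_card, Fintype.card_fin]

lemma card_span_top (V : Type*) [AddCommGroup V] [Module k V] [Finite V] (n : ℕ) :
    Nat.card {u : Fin n → V // Submodule.span k (Set.range u) = ⊤} =
      ∏ i ∈ Finset.range (Module.finrank k V), (Fintype.card k ^ n - Fintype.card k ^ i) := by
  classical
  by_cases htn : Module.finrank k V ≤ n
  · set t := Module.finrank k V with ht
    let e : V ≃ₗ[k] (Fin t → k) := (Module.finBasis k V).equivFun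
    have key : ∀ u : Fin n → V,
        span k (Set.range (⇑e ∘ u)) = ⊤ ↔ span k (Set.range u) = ⊤ := by
      intro u
      rw [Set.range_comp]
      have hcoe : ⇑e '' Set.range u = ⇑e.toLinearMap '' Set.range u := rfl
      rw [hcoe, ← Submodule.map_span e.toLinearMap]
      constructor
      · intro h
        apply Submodule.map_injective_of_injective e.injective (f := e.toLinearMap)
        rw [h, Submodule.map_top, LinearEquiv.range]
      · intro h
        rw [h, Submodule.map_top, LinearEquiv.range]
    have E1 : {u : Fin n → V // span k (Set.range u) = ⊤} ≃
        {A : Fin n → Fin t → k // span k (Set.range A) = ⊤} :=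
      { toFun := fun u => ⟨⇑e ∘ u.1, (key u.1).2 u.2⟩
        invFun := fun A => ⟨⇑e.symm ∘ A.1, by
          have hA : ⇑e ∘ (⇑e.symm ∘ A.1) = A.1 := by funext i; simp
          exact (key _).1 (by rw [hA]; exact A.2)⟩
        left_inv := fun u => Subtype.ext (by funext i; simp)
        right_inv := fun A => Subtype.ext (by funext i; simp) }
    have E2 : {A : Fin n → Fin t → k // span k (Set.range A) = ⊤} ≃
        {c : Fin t → Fin n → k // LinearIndependent k c} :=
      { toFun := fun A => ⟨fun i j => A.1 j i, (span_rows_top_iff_cols_li n t A.1).1 A.2⟩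
        invFun := fun c => ⟨fun j i => c.1 i j, (span_rows_top_iff_cols_li n t _).2 c.2⟩
        left_inv := fun A => rfl
        right_inv := fun c => rfl }
    rw [Nat.card_congr (E1.trans E2), card_linearIndependent
      (by rw [Module.finrank_fintype_fun_eq_card, Fintype.card_fin]; exact htn)]
    rw [Module.finrank_fintype_fun_eq_card, Fintype.card_fin]
    exact Fin.prod_univ_eq_prod_range (fun i => Fintype.card k ^ n - Fintype.card k ^ i) t
  · have hempty : IsEmpty {u : Fin n → V // span k (Set.range u) = ⊤} := by
      constructor
      rintro ⟨u, hu⟩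
      apply htn
      have h1 := finrank_span_le_card (R := k) (Set.range u)
      rw [hu, finrank_top] at h1
      calc Module.finrank k V ≤ (Set.range u).toFinset.card := h1
        _ ≤ Fintype.card (Fin n) := by
            rw [Set.toFinset_range]
            exact Finset.card_image_le.trans (le_of_eq (Finset.card_univ))
        _ = n := Fintype.card_fin n
    rw [Nat.card_of_isEmpty]
    symm
    apply Finset.prod_eq_zero (i := n)
    · exact Finset.mem_range.2 (lt_of_not_ge htn)
    · exact Nat.sub_self _

section Nakayama

variable {P : Type*} [AddCommGroup P] [Module (Polynomial k) P] [Module k P]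
  [IsScalarTower k (Polynomial k) P]

local notation "R" => Polynomial k
local notation "XP" => LinearMap.range (LinearMap.lsmul (Polynomial k) P (X : Polynomial k))

lemma X_smul_quot (y : P ⧸ XP) : (X : R) • y = 0 := by
  induction y using Submodule.Quotient.induction_on with
  | _ x =>
    rw [← Submodule.Quotient.mk_smul, Submodule.Quotient.mk_eq_zero]
    exact ⟨x, rfl⟩

lemma smul_quot_eq (c : R) (y : P ⧸ XP) : c • y = c.coeff 0 • y := by
  obtain ⟨c', hc'⟩ : (X : R) ∣ (c - C (c.coeff 0)) := X_dvd_iff.2 (by simp)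
  have hc : c = C (c.coeff 0) + X * c' := by rw [← hc']; ring
  have h2 : c • y = (C (c.coeff 0)) • y + ((X : R) * c') • y := by rw [← add_smul, ← hc]
  rw [h2, mul_smul, X_smul_quot, add_zero, ← Polynomial.algebraMap_eq, algebraMap_smul]

lemma span_k_top_iff (T : Set (P ⧸ XP)) :
    span k T = ⊤ ↔ span R T = ⊤ := by
  have hle : (span R T).restrictScalars k = span k T := by
    let W : Submodule R (P ⧸ XP) :=
      { carrier := span k T
        add_mem' := fun ha hb => Submodule.add_mem _ ha hb
        zero_mem' := Submodule.zero_mem _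
        smul_mem' := fun c x hx => by
          show c • x ∈ span k T
          rw [smul_quot_eq]
          exact Submodule.smul_mem _ _ hx }
    have h1 : span R T ≤ W := Submodule.span_le.2 Submodule.subset_span
    apply le_antisymm
    · intro x hx
      exact h1 hx
    · exact Submodule.span_le.2 Submodule.subset_span
  constructor
  · intro h
    rw [← Submodule.restrictScalars_eq_top_iff (S := k), hle, h]
  · intro h
    rw [← hle, h]
    rfl

lemma nakayama {N : ℕ} (hN : ∀ x : P, (X : R) ^ N • x = 0) (S : Set P) :
    span R S = ⊤ ↔ span k ((XP).mkQ '' S) = ⊤ := by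
  rw [span_k_top_iff, ← Submodule.map_span, Submodule.map_mkQ_eq_top]
  constructor
  · intro h; rw [h, sup_top_eq]
  · intro h
    have key : ∀ j : ℕ, span R S ⊔ LinearMap.range (LinearMap.lsmul R P ((X : R) ^ j)) = ⊤ := by
      intro j
      induction j with
      | zero =>
        rw [eq_top_iff]
        intro x _
        exact Submodule.mem_sup_right ⟨x, by simp⟩
      | succ j ih =>
        rw [eq_top_iff]
        intro x _
        have hx : x ∈ span R S ⊔ LinearMap.range (LinearMap.lsmul R P ((X : R) ^ j)) :=
          ih ▸ Submodule.mem_top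
        obtain ⟨s, hs, y', hy', rfl⟩ := Submodule.mem_sup.mp hx
        obtain ⟨y, rfl⟩ := hy'
        have hy : y ∈ XP ⊔ span R S := h ▸ Submodule.mem_top
        obtain ⟨z1, hz1, s', hs', hyeq⟩ := Submodule.mem_sup.mp hy
        obtain ⟨z, rfl⟩ := hz1
        refine Submodule.mem_sup.mpr ⟨s + (X : R) ^ j • s',
          Submodule.add_mem _ hs (Submodule.smul_mem _ _ hs'), (X : R) ^ (j + 1) • z,
          ⟨z, by simp⟩, ?_⟩
        simp only [LinearMap.lsmul_apply] at hyeq ⊢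
        rw [← hyeq, smul_add, smul_smul, pow_succ]
        abel
    have h0 := key N
    have hbot : LinearMap.range (LinearMap.lsmul R P ((X : R) ^ N)) = ⊥ := by
      rw [LinearMap.range_eq_bot]
      ext x
      simp [hN x]
    rw [hbot, sup_bot_eq] at h0
    exact h0

end Nakayama

section Count

variable {P : Type*} [AddCommGroup P] [Module (Polynomial k) P] [Module k P]
  [IsScalarTower k (Polynomial k) P] [Finite P]

local notation "R" => Polynomial k
local notation "XP" => LinearMap.range (LinearMap.lsmul (Polynomial k) P (X : Polynomial k))

lemma card_span_R_top (n : ℕ) {N : ℕ} (hN : ∀ x : P, (X : R) ^ N • x = 0) :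
    Nat.card {w : Fin n → P // span R (Set.range w) = ⊤} =
      Nat.card ↥XP ^ n *
        Nat.card {u : Fin n → (P ⧸ XP) // span k (Set.range u) = ⊤} := by
  have hsurj : Function.Surjective (XP).mkQ := Submodule.mkQ_surjective _
  let σ : (P ⧸ XP) → P := Function.surjInv hsurj
  have hσ : ∀ y, (XP).mkQ (σ y) = y := Function.surjInv_eq hsurj
  have hmem : ∀ x : P, x ∈ XP ↔ (XP).mkQ x = 0 := fun x => by
    rw [Submodule.mkQ_apply, Submodule.Quotient.mk_eq_zero]
  have E : {w : Fin n → P // span R (Set.range w) = ⊤} ≃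
      ({u : Fin n → (P ⧸ XP) // span k (Set.range u) = ⊤} × (Fin n → ↥XP)) :=
    { toFun := fun w =>
        (⟨(XP).mkQ ∘ w.1, by
          have := (nakayama hN (Set.range w.1)).1 w.2
          rwa [← Set.range_comp] at this⟩,
         fun i => ⟨w.1 i - σ ((XP).mkQ (w.1 i)), (hmem _).2 (by simp [map_sub, hσ])⟩)
      invFun := fun p => ⟨fun i => σ (p.1.1 i) + (p.2 i : P), by
        apply (nakayama hN _).2
        have hcomp : (XP).mkQ ∘ (fun i => σ (p.1.1 i) + (p.2 i : P)) = p.1.1 := by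
          funext i
          have hz : (XP).mkQ (p.2 i : P) = 0 := (hmem _).1 (p.2 i).2
          simp [map_add, hσ, hz]
        rw [← Set.range_comp, hcomp]
        exact p.1.2⟩
      left_inv := fun w => Subtype.ext (by funext i; simp)
      right_inv := fun p => by
        refine Prod.ext (Subtype.ext (funext fun i => ?_)) (funext fun i => Subtype.ext ?_)
        · have hz : (XP).mkQ (p.2 i : P) = 0 := (hmem _).1 (p.2 i).2
          simp [map_add, hσ, hz]
        · have hz : (XP).mkQ (p.2 i : P) = 0 := (hmem _).1 (p.2 i).2
          simp [map_add, hσ, hz] }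
  rw [Nat.card_congr E, Nat.card_prod, Nat.card_fun, Nat.card_eq_fintype_card (α := Fin n),
    Fintype.card_fin, mul_comm]

end Count

section Main

variable {M : Type} [AddCommGroup M] [Module (Polynomial k) M] [Module k M]
  [IsScalarTower k (Polynomial k) M] [Finite M]

local notation "R" => Polynomial k

lemma card_span_eq_I (n : ℕ) (I : Submodule R M) :
    Nat.card {v : Fin n → M // span R (Set.range v) = I} =
      Nat.card {w : Fin n → ↥I // span R (Set.range w) = ⊤} := by
  have key : ∀ w : Fin n → ↥I,
      span R (Set.range ((↑) ∘ w : Fin n → M)) = I ↔ span R (Set.range w) = ⊤ := by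
    intro w
    rw [Set.range_comp]
    have hco : ((↑) : ↥I → M) '' Set.range w = I.subtype '' Set.range w := rfl
    rw [hco, ← Submodule.map_span]
    constructor
    · intro h
      apply Submodule.map_injective_of_injective I.injective_subtype
      rw [Submodule.map_top, Submodule.range_subtype, h]
    · intro h; rw [h, Submodule.map_top, Submodule.range_subtype]
  refine Nat.card_congr
    { toFun := fun v => ⟨fun i => ⟨v.1 i, by
          have h : v.1 i ∈ span (Polynomial k) (Set.range v.1) :=
            Submodule.subset_span (Set.mem_range_self i)
          rwa [v.2] at h⟩,
        (key _).1 v.2⟩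
      invFun := fun w => ⟨fun i => (w.1 i : M), (key _).2 w.2⟩
      left_inv := fun v => Subtype.ext (funext fun i => rfl)
      right_inv := fun w => Subtype.ext (funext fun i => Subtype.ext rfl) }

lemma key_count [Fintype (Submodule R M)] {N : ℕ}
    (hN : ∀ x : M, (X : R) ^ N • x = 0) (n : ℕ) :
    ∑ I : Submodule R M, (Fintype.card k ^ (Module.finrank k ↥I - tX k ↥I)) ^ n *
        ∏ i ∈ Finset.range (tX k ↥I), (Fintype.card k ^ n - Fintype.card k ^ i)
      = (Fintype.card k ^ Module.finrank k M) ^ n := by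
  classical
  letI : Fintype M := Fintype.ofFinite M
  have step1 : (Fintype.card k ^ Module.finrank k M) ^ n = Nat.card (Fin n → M) := by
    rw [Nat.card_fun, Nat.card_eq_fintype_card (α := Fin n), Fintype.card_fin,
      Nat.card_eq_fintype_card, card_eq_pow_finrank (K := k) (V := M)]
  have step2 : Nat.card (Fin n → M) =
      ∑ I : Submodule R M, Nat.card {v : Fin n → M // span R (Set.range v) = I} := by
    rw [Nat.card_eq_fintype_card, ← Finset.card_univ,
      Finset.card_eq_sum_card_fiberwise
        (f := fun v : Fin n → M => span R (Set.range v)) (t := Finset.univ)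
        (fun _ _ => Finset.mem_univ _)]
    refine Finset.sum_congr rfl fun I _ => ?_
    rw [Nat.card_eq_fintype_card, Fintype.card_subtype]
  rw [step1, step2]
  refine Finset.sum_congr rfl fun I _ => ?_
  have hNI : ∀ x : ↥I, (X : R) ^ N • x = 0 := fun x => Subtype.ext (by
    simpa using hN (x : M))
  have htX : tX k ↥I =
      Module.finrank k (↥I ⧸ LinearMap.range (LinearMap.lsmul R ↥I (X : R))) := rfl
  have hXPI : Nat.card ↥(LinearMap.range (LinearMap.lsmul R ↥I (X : R))) =
      Fintype.card k ^ (Module.finrank k ↥I - tX k ↥I) := by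
    set XPI := LinearMap.range (LinearMap.lsmul R ↥I (X : R)) with hXPIdef
    have hq : Module.finrank k (↥I ⧸ XPI) =
        Module.finrank k ↥I - Module.finrank k ↥XPI :=
      Submodule.finrank_quotient XPI
    have hfr : Module.finrank k ↥(XPI.restrictScalars k) = Module.finrank k ↥XPI :=
      ((Submodule.restrictScalarsEquiv k (Polynomial k) ↥I XPI).restrictScalars k).finrank_eq
    have hle : Module.finrank k ↥XPI ≤ Module.finrank k ↥I := by
      rw [← hfr]
      exact Submodule.finrank_le (XPI.restrictScalars k)
    letI : Fintype ↥XPI := Fintype.ofFinite _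
    rw [Nat.card_eq_fintype_card, card_eq_pow_finrank (K := k)]
    congr 1
    rw [htX, hq]
    omega
  rw [card_span_eq_I, card_span_R_top n hNI, hXPI, card_span_top, ← htX]

end Main

lemma cast_prod_sub (q m t : ℕ) (hq : 1 ≤ q) :
    ((∏ i ∈ Finset.range t, (q ^ m - q ^ i) : ℕ) : ℤ) =
      ∏ i ∈ Finset.range t, ((q : ℤ) ^ m - (q : ℤ) ^ i) := by
  by_cases h : t ≤ m
  · rw [Nat.cast_prod]
    refine Finset.prod_congr rfl fun i hi => ?_
    have hi' : i ≤ m := le_trans (Nat.le_of_lt_succ (Nat.lt_succ_of_lt (Finset.mem_range.1 hi)))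
      (le_trans (Nat.le_of_lt_succ (Nat.lt_succ_of_le (le_refl t))) h)
    rw [Nat.cast_sub (Nat.pow_le_pow_right hq hi')]
    push_cast
    ring
  · have hm : m ∈ Finset.range t := Finset.mem_range.2 (lt_of_not_ge h)
    rw [Finset.prod_eq_zero hm (Nat.sub_self (q ^ m)),
      Finset.prod_eq_zero hm (sub_self ((q : ℤ) ^ m)), Nat.cast_zero]

theorem sum_subs_eq_X_pow
    (q : ℕ) (hq : Odd q) (k : Type) [Field k] [Fintype k] (hk : Fintype.card k = q)
    (M : Type) [AddCommGroup M] [Module (Polynomial k) M] [Module k M]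
    [IsScalarTower k (Polynomial k) M] [Finite M]
    (htor : ∃ N : ℕ, ∀ x : M, (Polynomial.X : Polynomial k) ^ N • x = 0)
    (b : ℕ) (hb : Module.finrank k M = b) :
    ∑ᶠ I : Submodule (Polynomial k) M,
      ((Polynomial.X : Polynomial ℤ) ^ (Module.finrank k ↥I - tX k ↥I) *
        ∏ i ∈ Finset.range (tX k ↥I),
          (Polynomial.X - Polynomial.C ((q : ℤ) ^ i))) =
      (Polynomial.X : Polynomial ℤ) ^ b := by
  classical
  subst hk hb
  obtain ⟨N, hN⟩ := htor
  have hfin : Finite (Submodule (Polynomial k) M) :=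
    Finite.of_injective (fun I => (I : Set M)) SetLike.coe_injective
  letI : Fintype (Submodule (Polynomial k) M) := Fintype.ofFinite _
  rw [finsum_eq_sum_of_fintype]
  have hq2 : 2 ≤ Fintype.card k := Fintype.one_lt_card
  apply Polynomial.eq_of_infinite_eval_eq
  apply Set.infinite_of_injective_forall_mem
    (f := fun m : ℕ => ((Fintype.card k ^ m : ℕ) : ℤ))
  · exact fun a b hab => Nat.pow_right_injective hq2 (Nat.cast_injective hab)
  · intro m
    have hA := key_count (M := M) hN m
    simp only [Set.mem_setOf_eq]
    have h2 : Polynomial.eval (((Fintype.card k ^ m : ℕ) : ℤ))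
        ((X : Polynomial ℤ) ^ Module.finrank k M) =
        (((Fintype.card k ^ Module.finrank k M) ^ m : ℕ) : ℤ) := by
      rw [Polynomial.eval_pow, Polynomial.eval_X]
      push_cast
      rw [← pow_mul, ← pow_mul, mul_comm]
    rw [h2, ← hA, Polynomial.eval_finset_sum, Nat.cast_sum]
    refine Finset.sum_congr rfl fun I _ => ?_
    rw [Polynomial.eval_mul, Polynomial.eval_pow, Polynomial.eval_X, Polynomial.eval_prod,
      Nat.cast_mul, cast_prod_sub _ _ _ (le_trans one_le_two hq2)]
    congr 1
    · push_cast
      rw [← pow_mul, ← pow_mul, mul_comm]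
    · refine Finset.prod_congr rfl fun i _ => ?_
      rw [Polynomial.eval_sub, Polynomial.eval_X, Polynomial.eval_C]
      push_cast
      ring
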